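/- Let A be a C*-hyperbialgebra with coproduct Δ and counit ε, let Ã ⊆ A be a unital C*-subalgebra, and let P: A → Ã be a conditional expectation (norm-one projection onto Ã) satisfying (P ⊗ id)∘Δ∘P = (P ⊗ P)∘Δ = (id ⊗ P)∘Δ. Then the map Δ̃ := (P ⊗ P)∘Δ restricted to Ã is coassociative: (Δ̃ ⊗ id)∘Δ̃ = (id ⊗ Δ̃)∘Δ̃ on Ã. -/
import Mathlib


open scoped TensorProduct

theorem map_map_apply' {R : Type*} [CommSemiring R]
    {M N P Q M' N' : Type*}
    [AddCommMonoid M] [AddCommMonoid N] [AddCommMonoid P] [AddCommMonoid Q]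
    [AddCommMonoid M'] [AddCommMonoid N']
    [Module R M] [Module R N] [Module R P] [Module R Q] [Module R M'] [Module R N']
    (f₂ : P →ₗ[R] M') (f₁ : M →ₗ[R] P) (g₂ : Q →ₗ[R] N') (g₁ : N →ₗ[R] Q)
    (x : M ⊗[R] N) :
    TensorProduct.map f₂ g₂ (TensorProduct.map f₁ g₁ x)
      = TensorProduct.map (f₂ ∘ₗ f₁) (g₂ ∘ₗ g₁) x := by
  rw [TensorProduct.map_comp]; rfl


/-- If `P` is a conditional expectation on a C*-hyperbialgebra `A` onto a unital
C*-subalgebra `Ã` satisfying `(P ⊗ id)∘Δ∘P = (P ⊗ P)∘Δ = (id ⊗ P)∘Δ`, then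
`Δ̃ := (P ⊗ P)∘Δ` is coassociative on `Ã`. -/
theorem stmt_0 {A : Type*} [NormedRing A] [StarRing A] [CStarRing A]
    [NormedAlgebra ℂ A] [StarModule ℂ A] [CompleteSpace A]
    (Δ : A →ₗ[ℂ] A ⊗[ℂ] A) (ε : A →⋆ₐ[ℂ] ℂ)
    (hcoassoc : ∀ a : A,
      (TensorProduct.assoc ℂ A A A)
          ((TensorProduct.map Δ (LinearMap.id : A →ₗ[ℂ] A)) (Δ a))
        = (TensorProduct.map (LinearMap.id : A →ₗ[ℂ] A) Δ) (Δ a))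
    (hcounit₁ : ∀ a : A,
      (TensorProduct.lid ℂ A)
        ((TensorProduct.map ε.toLinearMap (LinearMap.id : A →ₗ[ℂ] A)) (Δ a)) = a)
    (hcounit₂ : ∀ a : A,
      (TensorProduct.rid ℂ A)
        ((TensorProduct.map (LinearMap.id : A →ₗ[ℂ] A) ε.toLinearMap) (Δ a)) = a)
    (Asub : StarSubalgebra ℂ A)
    (P : A →L[ℂ] A) (hPnorm : ‖P‖ = 1)
    (hPrange : ∀ a : A, P a ∈ Asub)
    (hPfix : ∀ a ∈ Asub, P a = a)
    (h₁ : (TensorProduct.map (P : A →ₗ[ℂ] A) (LinearMap.id : A →ₗ[ℂ] A)).comp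
        (Δ.comp (P : A →ₗ[ℂ] A))
      = (TensorProduct.map (P : A →ₗ[ℂ] A) (P : A →ₗ[ℂ] A)).comp Δ)
    (h₂ : (TensorProduct.map (P : A →ₗ[ℂ] A) (P : A →ₗ[ℂ] A)).comp Δ
      = (TensorProduct.map (LinearMap.id : A →ₗ[ℂ] A) (P : A →ₗ[ℂ] A)).comp Δ)
    (Δt : A →ₗ[ℂ] A ⊗[ℂ] A)
    (hΔt : Δt = (TensorProduct.map (P : A →ₗ[ℂ] A) (P : A →ₗ[ℂ] A)).comp Δ) :
    ∀ a ∈ Asub,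
      (TensorProduct.assoc ℂ A A A)
          ((TensorProduct.map Δt (LinearMap.id : A →ₗ[ℂ] A)) (Δt a))
        = (TensorProduct.map (LinearMap.id : A →ₗ[ℂ] A) Δt) (Δt a) := by
  intro a ha
  have hPa : (P : A →ₗ[ℂ] A) a = a := hPfix a ha
  set Pl : A →ₗ[ℂ] A := (P : A →ₗ[ℂ] A) with hPl
  have e1 : TensorProduct.map Pl LinearMap.id (Δ a) = TensorProduct.map Pl Pl (Δ a) := by
    have := LinearMap.congr_fun h₁ a
    simpa [LinearMap.comp_apply, hPa] using this
  have e2 : TensorProduct.map Pl Pl (Δ a) = TensorProduct.map LinearMap.id Pl (Δ a) :=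
    LinearMap.congr_fun h₂ a
  have eΔt : Δt a = TensorProduct.map Pl Pl (Δ a) := by rw [hΔt]; rfl
  have lhs1 : (TensorProduct.map Δt (LinearMap.id : A →ₗ[ℂ] A)) (Δt a)
      = TensorProduct.map (TensorProduct.map Pl Pl) Pl
          ((TensorProduct.map Δ (LinearMap.id : A →ₗ[ℂ] A)) (Δ a)) := by
    rw [eΔt, e2, map_map_apply', map_map_apply', hΔt]
    congr 1 <;> ext x <;> simp [LinearMap.comp_apply]
  have rhs1 : (TensorProduct.map (LinearMap.id : A →ₗ[ℂ] A) Δt) (Δt a)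
      = TensorProduct.map Pl Δt (Δ a) := by
    rw [eΔt, ← e1, map_map_apply']
    congr 1 <;> ext x <;> simp [LinearMap.comp_apply]
  rw [lhs1, rhs1, ← TensorProduct.map_map_assoc, hcoassoc, map_map_apply']
  congr 1 <;> ext x <;> simp [hΔt, LinearMap.comp_apply]
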